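/- Let $I_{n,h} = \bigcap_{1 \leq i_1 < \cdots < i_h \leq n} (x_{i_1}, \dots, x_{i_h})$ be the monomial star configuration ideal in $k[x_1, \dots, x_n]$. Then the least degree of a nonzero element of the $m$-th symbolic power is $\alpha(I_{n,h}^{(m)}) = m + (n - h)\lceil m/h \rceil$. -/

import Mathlib

open MvPolynomial

/-- The `m`-th symbolic power of the monomial star configuration ideal
`I_{n,h} = ⋂ (x_{i₁},…,x_{i_h})`: the intersection of the `m`-th powers of the
ideals generated by `h`-element subsets of the variables. -/
noncomputable def starSymbolicPower (k : Type*) [Field k] (n h m : ℕ) :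
    Ideal (MvPolynomial (Fin n) k) :=
  ⨅ (s : Finset (Fin n)) (_ : s.card = h),
    (Ideal.span ((fun i => (X i : MvPolynomial (Fin n) k)) '' ↑s)) ^ m

/-- `α(J)`: the least degree of a nonzero homogeneous element of `J`. -/
noncomputable def alphaDeg {k : Type*} [Field k] {N : ℕ} (J : Ideal (MvPolynomial (Fin N) k)) : ℕ :=
  sInf {d : ℕ | ∃ f ∈ J, f ≠ 0 ∧ MvPolynomial.IsHomogeneous f d}


section Aux
variable {k : Type*} [Field k] {n : ℕ}

/-- Polynomials all of whose monomials have `s`-weight at least `m`. -/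
def wIdeal (k : Type*) [Field k] {n : ℕ} (s : Finset (Fin n)) (m : ℕ) :
    Ideal (MvPolynomial (Fin n) k) where
  carrier := {f | ∀ b ∈ f.support, m ≤ ∑ i ∈ s, b i}
  zero_mem' := by simp
  add_mem' := by
    intro f g hf hg b hb
    rcases Finset.mem_union.1 (MvPolynomial.support_add hb) with hb' | hb'
    · exact hf b hb'
    · exact hg b hb'
  smul_mem' := by
    intro p f hf b hb
    rw [smul_eq_mul] at hb
    obtain ⟨u, hu, v, hv, huv⟩ := Finset.mem_add.1 (MvPolynomial.support_mul p f hb)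
    have h2 := hf v hv
    have h3 : ∑ i ∈ s, b i = ∑ i ∈ s, u i + ∑ i ∈ s, v i := by
      rw [← huv, ← Finset.sum_add_distrib]; rfl
    omega

lemma mem_wIdeal {s : Finset (Fin n)} {m : ℕ} {f : MvPolynomial (Fin n) k} :
    f ∈ wIdeal k s m ↔ ∀ b ∈ f.support, m ≤ ∑ i ∈ s, b i := Iff.rfl

lemma mul_mem_wIdeal {s : Finset (Fin n)} {a b : ℕ} {f g : MvPolynomial (Fin n) k}
    (hf : f ∈ wIdeal k s a) (hg : g ∈ wIdeal k s b) : f * g ∈ wIdeal k s (a + b) := by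
  intro c hc
  obtain ⟨u, hu, v, hv, huv⟩ := Finset.mem_add.1 (MvPolynomial.support_mul f g hc)
  have h1 := hf u hu
  have h2 := hg v hv
  have h3 : ∑ i ∈ s, c i = ∑ i ∈ s, u i + ∑ i ∈ s, v i := by
    rw [← huv, ← Finset.sum_add_distrib]; rfl
  omega

lemma span_pow_le_wIdeal (s : Finset (Fin n)) (m : ℕ) :
    (Ideal.span ((fun i => (X i : MvPolynomial (Fin n) k)) '' ↑s)) ^ m ≤ wIdeal k s m := by
  induction m with
  | zero => intro f _; exact fun b _ => Nat.zero_le _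
  | succ m ih =>
    have hspan : Ideal.span ((fun i => (X i : MvPolynomial (Fin n) k)) '' ↑s) ≤ wIdeal k s 1 := by
      rw [Ideal.span_le]
      rintro _ ⟨i, hi, rfl⟩
      rw [SetLike.mem_coe, mem_wIdeal]
      intro b hb
      rw [MvPolynomial.support_X] at hb
      rw [Finset.mem_singleton] at hb
      subst hb
      have hi' : i ∈ s := Finset.mem_coe.1 hi
      have hle := Finset.single_le_sum
        (f := fun j => (Finsupp.single i 1 : Fin n →₀ ℕ) j) (fun j _ => Nat.zero_le _) hi'
      simpa using hle
    rw [pow_succ]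
    refine Ideal.mul_le.2 (fun f hf g hg => ?_)
    exact mul_mem_wIdeal (ih hf) (hspan hg)

lemma prod_pow_mem_pow {R : Type*} [CommRing R] (I : Ideal R) (s : Finset (Fin n)) (x : Fin n → R)
    (e : Fin n → ℕ) (hx : ∀ i ∈ s, x i ∈ I) :
    (∏ i ∈ s, x i ^ e i) ∈ I ^ (∑ i ∈ s, e i) := by
  classical
  induction s using Finset.induction_on with
  | empty => simp
  | insert a s' hnot ih =>
    rw [Finset.prod_insert hnot, Finset.sum_insert hnot, pow_add]
    exact Ideal.mul_mem_mul (Ideal.pow_mem_pow (hx _ (Finset.mem_insert_self _ _)) _)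
      (ih (fun i hi => hx i (Finset.mem_insert_of_mem hi)))

lemma monomial_eq_prod_univ (b : Fin n →₀ ℕ) :
    (monomial b (1 : k)) = ∏ i : Fin n, (X i : MvPolynomial (Fin n) k) ^ b i := by
  rw [← prod_X_pow_eq_monomial]
  exact Finset.prod_subset (Finset.subset_univ _)
    (fun i _ hi => by rw [Finsupp.notMem_support_iff.1 hi, pow_zero])

lemma monomial_mem_span_pow (s : Finset (Fin n)) (m : ℕ) (b : Fin n →₀ ℕ)
    (hb : m ≤ ∑ i ∈ s, b i) :
    (monomial b (1 : k)) ∈ (Ideal.span ((fun i => (X i : MvPolynomial (Fin n) k)) '' ↑s)) ^ m := by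
  classical
  rw [monomial_eq_prod_univ, ← Finset.prod_mul_prod_compl s]
  refine Ideal.mul_mem_right _ _ ?_
  refine Ideal.pow_le_pow_right hb ?_
  exact prod_pow_mem_pow _ s _ _ (fun i hi => Ideal.subset_span ⟨i, hi, rfl⟩)

lemma filter_val_lt_card {t : ℕ} (ht : t ≤ n) :
    ((Finset.univ : Finset (Fin n)).filter (fun i : Fin n => (i : ℕ) < t)).card = t := by
  have he : (Finset.univ : Finset (Fin n)).filter (fun i : Fin n => (i : ℕ) < t)
      = Finset.image (Fin.castLE ht) Finset.univ := by
    ext i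
    simp only [Finset.mem_filter, Finset.mem_univ, true_and, Finset.mem_image]
    constructor
    · intro hi; exact ⟨⟨i, hi⟩, Fin.ext rfl⟩
    · rintro ⟨j, rfl⟩; exact j.isLt
  rw [he, Finset.card_image_of_injective _ (Fin.castLE_injective ht), Finset.card_univ,
    Fintype.card_fin]

lemma degree_eq_sum_univ (b : Fin n →₀ ℕ) : b.degree = ∑ i, b i :=
  Finset.sum_subset (Finset.subset_univ _)
    (fun _i _ hi => Finsupp.notMem_support_iff.1 hi)

lemma sum_lower_bound (a : Fin n → ℕ) (h m : ℕ) (hh : 1 ≤ h) (hn : h ≤ n) (hm : 1 ≤ m)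
    (H : ∀ s : Finset (Fin n), s.card = h → m ≤ ∑ i ∈ s, a i) :
    m + (n - h) * ((m + h - 1) / h) ≤ ∑ i, a i := by
  classical
  obtain ⟨c, hc⟩ : ∃ c, c = (m + h - 1) / h := ⟨_, rfl⟩
  rw [← hc]
  set σ := Tuple.sort a with hσ
  set b := a ∘ σ with hbdef
  have hmono : Monotone b := Tuple.monotone_sort a
  have hsum : ∑ i, b i = ∑ i, a i := Equiv.sum_comp σ a
  set T : Finset (Fin n) := Finset.univ.filter (fun i : Fin n => (i : ℕ) < h) with hT
  have hTcard : T.card = h := filter_val_lt_card hn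
  have hTs : m ≤ ∑ i ∈ T, b i := by
    have hH := H (T.image σ)
      (by rw [Finset.card_image_of_injective _ σ.injective, hTcard])
    rwa [Finset.sum_image (fun x _ y _ hxy => σ.injective hxy)] at hH
  have hj : h - 1 < n := by omega
  set j : Fin n := ⟨h - 1, hj⟩ with hjdef
  have hbj : ∀ i ∈ T, b i ≤ b j := by
    intro i hi
    have hi' : (i : ℕ) < h := (Finset.mem_filter.1 hi).2
    exact hmono (by rw [Fin.le_def]; simp only [hjdef]; omega)
  have hTbj : m ≤ h * b j := by
    calc m ≤ ∑ i ∈ T, b i := hTs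
    _ ≤ ∑ _i ∈ T, b j := Finset.sum_le_sum hbj
    _ = h * b j := by rw [Finset.sum_const, hTcard, smul_eq_mul]
  have hcbj : c ≤ b j := by
    have hA : m ≤ b j * h := by rw [mul_comm]; exact hTbj
    have h1 : m + h - 1 < (b j + 1) * h := by rw [add_mul, one_mul]; omega
    have h2 := (Nat.div_lt_iff_lt_mul hh).2 h1
    omega
  have hcomp : ∀ i ∈ Tᶜ, c ≤ b i := by
    intro i hi
    have hi' : ¬ (i : ℕ) < h := by
      intro hlt
      exact (Finset.mem_compl.1 hi) (Finset.mem_filter.2 ⟨Finset.mem_univ _, hlt⟩)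
    exact le_trans hcbj (hmono (by rw [Fin.le_def]; simp only [hjdef]; omega))
  have hcard : Tᶜ.card = n - h := by
    rw [Finset.card_compl, hTcard, Fintype.card_fin]
  calc m + (n - h) * c ≤ (∑ i ∈ T, b i) + ∑ i ∈ Tᶜ, b i := by
        refine Nat.add_le_add hTs ?_
        calc (n - h) * c = ∑ _i ∈ Tᶜ, c := by rw [Finset.sum_const, hcard, smul_eq_mul]
        _ ≤ ∑ i ∈ Tᶜ, b i := Finset.sum_le_sum hcomp
  _ = ∑ i, b i := Finset.sum_add_sum_compl T b
  _ = ∑ i, a i := hsum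

end Aux

/-- For the monomial star configuration ideal `I_{n,h}`, the least degree of a nonzero
element of the `m`-th symbolic power is `α(I_{n,h}^{(m)}) = m + (n-h)⌈m/h⌉`, where the
ceiling is written `(m + h - 1)/h` in natural division. -/
theorem alphaDeg_starSymbolicPower (k : Type*) [Field k] (n h m : ℕ)
    (hh : 1 ≤ h) (hhn : h ≤ n - 1) (hm : 1 ≤ m) :
    alphaDeg (starSymbolicPower k n h m) = m + (n - h) * ((m + h - 1) / h) := by
  classical
  have hn1 : 1 ≤ n := by
    rcases Nat.eq_zero_or_pos n with h0 | h0
    · subst h0; simp at hhn; omega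
    · exact h0
  have hn : h < n := by omega
  obtain ⟨c, hc⟩ : ∃ c, c = (m + h - 1) / h := ⟨_, rfl⟩
  rw [← hc]
  have hc' : c = (m - 1) / h + 1 := by
    have he : m + h - 1 = (m - 1) + h := by omega
    rw [hc, he, Nat.add_div_right _ hh]
  have h7 : (m - 1) / h < c := by omega
  have hmhc : m ≤ h * c := by
    have h8 := (Nat.div_lt_iff_lt_mul hh).1 h7
    rw [mul_comm] at h8
    omega
  have h9 : h * c ≤ m + h - 1 := by
    have h10 := Nat.div_mul_le_self (m + h - 1) h
    rw [← hc, mul_comm] at h10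
    exact h10
  have hc1 : 1 ≤ c := by rw [hc']; exact Nat.le_add_left 1 _
  obtain ⟨t, ht⟩ : ∃ t, t = h * c - m := ⟨_, rfl⟩
  have htlt : t < h := by omega
  have htn : t ≤ n := le_trans htlt.le hn.le
  set bw : Fin n →₀ ℕ :=
    Finsupp.equivFunOnFinite.symm (fun i : Fin n => c - (if (i : ℕ) < t then 1 else 0)) with hbw
  have hptw : ∀ i : Fin n, bw i + (if (i : ℕ) < t then 1 else 0) = c := by
    intro i
    have e1 : bw i = c - (if (i : ℕ) < t then 1 else 0) := rfl
    rw [e1]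
    split <;> omega
  have hsumind : ∀ s : Finset (Fin n),
      ∑ i ∈ s, bw i + (∑ i ∈ s, if (i : ℕ) < t then 1 else 0) = s.card * c := by
    intro s
    calc ∑ i ∈ s, bw i + (∑ i ∈ s, if (i : ℕ) < t then 1 else 0)
        = ∑ i ∈ s, (bw i + if (i : ℕ) < t then 1 else 0) := (Finset.sum_add_distrib).symm
      _ = ∑ _i ∈ s, c := Finset.sum_congr rfl (fun i _ => hptw i)
      _ = s.card * c := by rw [Finset.sum_const, smul_eq_mul]
  have hindt : (∑ i : Fin n, if (i : ℕ) < t then 1 else 0) = t := by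
    rw [Finset.sum_ite, Finset.sum_const, Finset.sum_const_zero, add_zero, smul_eq_mul,
      mul_one, filter_val_lt_card htn]
  have hindle : ∀ s : Finset (Fin n), (∑ i ∈ s, if (i : ℕ) < t then 1 else 0) ≤ t := by
    intro s
    calc (∑ i ∈ s, if (i : ℕ) < t then 1 else 0)
        ≤ ∑ i : Fin n, (if (i : ℕ) < t then 1 else 0) :=
          Finset.sum_le_sum_of_subset (Finset.subset_univ s)
    _ = t := hindt
  have hmem_s : ∀ s : Finset (Fin n), s.card = h → m ≤ ∑ i ∈ s, bw i := by
    intro s hs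
    have h1 := hsumind s
    have h2 := hindle s
    rw [hs] at h1
    omega
  have hmemJ : (monomial bw (1 : k)) ∈ starSymbolicPower k n h m := by
    rw [starSymbolicPower, Submodule.mem_iInf]
    intro s
    rw [Submodule.mem_iInf]
    intro hs
    exact monomial_mem_span_pow s m bw (hmem_s s hs)
  have hdeg : ∑ i, bw i = m + (n - h) * c := by
    have h1 := hsumind Finset.univ
    rw [Finset.card_univ, Fintype.card_fin, hindt] at h1
    have h4 : (n - h) * c + h * c = n * c := by rw [← Nat.add_mul, Nat.sub_add_cancel hn.le]
    omega
  have hhom : (monomial bw (1 : k)).IsHomogeneous (m + (n - h) * c) :=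
    isHomogeneous_monomial _ (by rw [degree_eq_sum_univ, hdeg])
  have hne : (monomial bw (1 : k)) ≠ 0 := by simp
  rw [alphaDeg]
  have hmemSet : (m + (n - h) * c) ∈
      {d : ℕ | ∃ f ∈ starSymbolicPower k n h m, f ≠ 0 ∧ MvPolynomial.IsHomogeneous f d} :=
    ⟨monomial bw 1, hmemJ, hne, hhom⟩
  refine le_antisymm (Nat.sInf_le hmemSet) (le_csInf ⟨_, hmemSet⟩ ?_)
  rintro d ⟨f, hfJ, hf0, hfh⟩
  obtain ⟨b, hb⟩ := MvPolynomial.support_nonempty.2 hf0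
  have hdb : d = ∑ i, b i := by
    have hw := hfh (MvPolynomial.mem_support_iff.1 hb)
    have h5 : b.degree = d := by rw [Finsupp.degree_eq_weight_one]; exact hw
    rw [← h5, degree_eq_sum_univ]
  rw [hdb, hc]
  refine sum_lower_bound (fun i => b i) h m hh hn.le hm ?_
  intro s hs
  have hfs : f ∈ (Ideal.span ((fun i => (X i : MvPolynomial (Fin n) k)) '' ↑s)) ^ m := by
    rw [starSymbolicPower, Submodule.mem_iInf] at hfJ
    have h6 := hfJ s
    rw [Submodule.mem_iInf] at h6
    exact h6 hs
  exact span_pow_le_wIdeal s m hfs b hb
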